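/- Let k be a field, A = k[X,Y], F ∈ A \ k with k(F) ⊊ Frac(A), and let 𝒜 = S⁻¹A where S = k[F] \ {0}. Then 𝒜 is a principal ideal domain of Krull dimension 1. -/

import Mathlib

open MvPolynomial

/-- The multiplicative set `S = k[F] \ {0}` in `A = k[X,Y]`. -/
def kFnonzero (k : Type) [Field k] (F : MvPolynomial (Fin 2) k) :
    Submonoid (MvPolynomial (Fin 2) k) where
  carrier := {a | a ∈ Algebra.adjoin k ({F} : Set (MvPolynomial (Fin 2) k)) ∧ a ≠ 0}
  mul_mem' := fun ha hb => ⟨mul_mem ha.1 hb.1, mul_ne_zero ha.2 hb.2⟩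
  one_mem' := ⟨one_mem _, one_ne_zero⟩

/-! ### Auxiliary lemmas -/

section GaussAux

/-- A resultant-style lemma: if `f` is prime and `f ∤ g` in `R[X]`, then the ideal
generated by `f` and `g` contains a nonzero constant. -/
theorem gauss_aux {R : Type*} [CommRing R] [IsDomain R] [NormalizedGCDMonoid R]
    {f g : Polynomial R} (hf : Prime f) (hfg : ¬ f ∣ g) :
    ∃ r : R, r ≠ 0 ∧ Polynomial.C r ∈ Ideal.span {f, g} := by
  classical
  have hf0 : f ≠ 0 := hf.ne_zero
  have hg0 : g ≠ 0 := fun h => hfg (h ▸ dvd_zero f)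
  by_cases hdeg : f.natDegree = 0
  · obtain ⟨c, hc⟩ := Polynomial.natDegree_eq_zero.mp hdeg
    refine ⟨c, ?_, ?_⟩
    · rintro rfl; rw [map_zero] at hc; exact hf0 hc.symm
    · rw [hc]; exact Ideal.subset_span (Set.mem_insert _ _)
  -- `f` is primitive
  have hprim : f.IsPrimitive := by
    intro r hr
    obtain ⟨t, ht⟩ := hr
    rcases hf.irreducible.isUnit_or_isUnit ht with h | h
    · exact Polynomial.isUnit_C.mp h
    · exfalso
      apply hdeg
      have h1 : f.natDegree ≤ 0 := by
        rw [ht]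
        refine Polynomial.natDegree_mul_le.trans ?_
        simp [Polynomial.natDegree_eq_zero_of_isUnit h]
      omega
  set φ := algebraMap R (FractionRing R) with hφ
  have φinj : Function.Injective φ := IsFractionRing.injective R (FractionRing R)
  have hmapinj : Function.Injective (Polynomial.map φ) := Polynomial.map_injective φ φinj
  have hfK : Irreducible (f.map φ) :=
    (Polynomial.IsPrimitive.irreducible_iff_irreducible_map_fraction_map hprim).mp hf.irreducible
  have hfKprime : Prime (f.map φ) := hfK.prime
  have hnd : ¬ f.map φ ∣ g.map φ := by
    intro hdvd
    have hcne : g.content ≠ 0 := fun h => hg0 (Polynomial.content_eq_zero_iff.mp h)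
    rw [show g = Polynomial.C g.content * g.primPart from g.eq_C_content_mul_primPart,
      Polynomial.map_mul, Polynomial.map_C] at hdvd
    rcases hfKprime.2.2 _ _ hdvd with h | h
    · have hC0 : (Polynomial.C (φ g.content) : Polynomial (FractionRing R)) ≠ 0 := by
        simp only [ne_eq, Polynomial.C_eq_zero]
        exact fun hc => hcne (φinj (by simpa using hc))
      have := Polynomial.natDegree_le_of_dvd h hC0
      rw [Polynomial.natDegree_C, Polynomial.natDegree_map_eq_of_injective φinj] at this
      omega
    · have : f ∣ g.primPart :=
        (hprim.dvd_iff_fraction_map_dvd_fraction_map (FractionRing R)).mpr h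
      exact hfg (this.trans g.primPart_dvd)
  have hcop : IsCoprime (f.map φ) (g.map φ) := hfK.coprime_iff_not_dvd.mpr hnd
  obtain ⟨a, b, hab⟩ := hcop
  obtain ⟨da, hda⟩ := IsLocalization.integerNormalization_map_to_map (nonZeroDivisors R) a
  obtain ⟨db, hdb⟩ := IsLocalization.integerNormalization_map_to_map (nonZeroDivisors R) b
  set A' := IsLocalization.integerNormalization (nonZeroDivisors R) a with hA'
  set B' := IsLocalization.integerNormalization (nonZeroDivisors R) b with hB'
  refine ⟨(da : R) * (db : R),
    mul_ne_zero (nonZeroDivisors.ne_zero da.2) (nonZeroDivisors.ne_zero db.2), ?_⟩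
  have key : Polynomial.C ((da : R) * (db : R)) =
      Polynomial.C (db : R) * A' * f + Polynomial.C (da : R) * B' * g := by
    apply hmapinj
    rw [Polynomial.map_add, Polynomial.map_mul, Polynomial.map_mul, Polynomial.map_mul,
      Polynomial.map_mul, Polynomial.map_C, Polynomial.map_C, Polynomial.map_C, hda, hdb]
    rw [Algebra.smul_def, Algebra.smul_def, Polynomial.algebraMap_apply,
      Polynomial.algebraMap_apply, map_mul]
    push_cast
    rw [Polynomial.C_mul]
    linear_combination (-(Polynomial.C (φ (da : R)) * Polynomial.C (φ (db : R)))) * hab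
  rw [key]
  exact Ideal.add_mem _
    (Ideal.mul_mem_left _ _ (Ideal.subset_span (Set.mem_insert _ _)))
    (Ideal.mul_mem_left _ _ (Ideal.subset_span (by simp)))

end GaussAux

section Main

variable {k : Type} [Field k]

/-- The substitution `X ↦ X`, `Y ↦ X^N`. -/
noncomputable def psiN (k : Type) [Field k] (N : ℕ) :
    MvPolynomial (Fin 2) k →ₐ[k] Polynomial k :=
  aeval ![Polynomial.X, Polynomial.X ^ N]

lemma psiN_monomial (N : ℕ) (d : Fin 2 →₀ ℕ) (a : k) :
    psiN k N (monomial d a) = Polynomial.C a * Polynomial.X ^ (d 0 + N * d 1) := by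
  rw [psiN, aeval_monomial, Finsupp.prod_fintype _ _ (fun i => pow_zero _),
    Fin.prod_univ_two]
  simp only [Matrix.cons_val_zero, Matrix.cons_val_one, Matrix.head_cons]
  rw [← pow_mul, ← pow_add, Polynomial.algebraMap_eq]

lemma psiN_ne_C {F : MvPolynomial (Fin 2) k} (hF : ∀ c : k, F ≠ C c) {N : ℕ}
    (hN : F.totalDegree < N) (c : k) : psiN k N F ≠ Polynomial.C c := by
  classical
  intro hc
  -- exponent function
  set e : (Fin 2 →₀ ℕ) → ℕ := fun d => d 0 + N * d 1 with he
  have hdbound : ∀ d ∈ F.support, d 0 < N := by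
    intro d hd
    have h1 : d 0 ≤ d.sum fun _ n => n := by
      rw [Finsupp.sum_fintype _ _ (fun i => rfl), Fin.sum_univ_two]
      omega
    exact lt_of_le_of_lt (h1.trans (MvPolynomial.le_totalDegree hd)) hN
  have heinj : ∀ d ∈ F.support, ∀ d' ∈ F.support, e d = e d' → d = d' := by
    intro d hd d' hd' hdd
    have h0 := hdbound d hd
    have h0' := hdbound d' hd'
    rw [he] at hdd; simp only at hdd
    have key : ∀ a b a' b' : ℕ, a < N → a' < N → a + N * b = a' + N * b' → b < b' → False := by
      intro a b a' b' ha ha' heq hbb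
      have h1 : N * (b + 1) ≤ N * b' := Nat.mul_le_mul_left N hbb
      rw [Nat.mul_succ] at h1
      linarith
    have h11 : d 1 = d' 1 := by
      rcases Nat.lt_trichotomy (d 1) (d' 1) with h | h | h
      · exact absurd (key _ _ _ _ h0 h0' hdd h) (fun hf => hf)
      · exact h
      · exact absurd (key _ _ _ _ h0' h0 hdd.symm h) (fun hf => hf)
    have h00 : d 0 = d' 0 := by
      rw [h11] at hdd
      exact Nat.add_right_cancel hdd
    ext i
    fin_cases i
    · exact h00
    · exact h11
  have hsum : psiN k N F = ∑ d ∈ F.support, Polynomial.C (coeff d F) * Polynomial.X ^ e d := by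
    conv_lhs => rw [F.as_sum, map_sum]
    exact Finset.sum_congr rfl fun d _ => psiN_monomial N d _
  have hcoeff : ∀ d ∈ F.support, (psiN k N F).coeff (e d) = coeff d F := by
    intro d hd
    rw [hsum, Polynomial.finset_sum_coeff]
    rw [Finset.sum_eq_single d]
    · simp
    · intro d' hd' hne
      rw [Polynomial.coeff_C_mul, Polynomial.coeff_X_pow, if_neg, mul_zero]
      exact fun hc => hne (heinj d' hd' d hd hc.symm)
    · intro h; exact absurd hd h
  -- every exponent in the support must be zero
  have hsupp : ∀ d ∈ F.support, d = 0 := by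
    intro d hd
    have h1 : coeff d F ≠ 0 := mem_support_iff.mp hd
    have hNpos : 0 < N := lt_of_le_of_lt (Nat.zero_le _) hN
    have hed : e d = 0 := by
      by_contra hed
      have h2 := hcoeff d hd
      rw [hc, Polynomial.coeff_C, if_neg hed] at h2
      exact h1 h2.symm
    rw [he] at hed; simp only at hed
    obtain ⟨hd0, hmul⟩ := Nat.add_eq_zero.mp hed
    have hd1 : d 1 = 0 := by
      rcases Nat.mul_eq_zero.mp hmul with h | h
      · omega
      · exact h
    ext i
    fin_cases i
    · simpa using hd0
    · simpa using hd1
  apply hF (coeff 0 F)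
  ext m
  rw [coeff_C]
  by_cases hm : m = 0
  · rw [hm, if_pos rfl]
  · rw [if_neg (fun h => hm h.symm)]
    by_contra hc0
    exact hm (hsupp m (mem_support_iff.mpr hc0))

lemma aeval_psiN_ne_zero {F : MvPolynomial (Fin 2) k} (hF : ∀ c : k, F ≠ C c) {N : ℕ}
    (hN : F.totalDegree < N) {q : Polynomial k} (hq : q ≠ 0) :
    Polynomial.aeval (psiN k N F) q ≠ 0 := by
  intro h0
  rw [← Polynomial.comp_eq_aeval] at h0
  rcases Polynomial.comp_eq_zero_iff.mp h0 with h | h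
  · exact hq h
  · exact psiN_ne_C hF hN _ h.2

/-- `F` is transcendental over `k`. -/
lemma aeval_F_ne_zero {F : MvPolynomial (Fin 2) k} (hF : ∀ c : k, F ≠ C c)
    {q : Polynomial k} (hq : q ≠ 0) : Polynomial.aeval F q ≠ 0 := by
  intro h
  apply aeval_psiN_ne_zero hF (Nat.lt_succ_self F.totalDegree) hq (N := F.totalDegree + 1)
  rw [Polynomial.aeval_algHom_apply, h, map_zero]

lemma aeval_F_mem_kFnonzero {F : MvPolynomial (Fin 2) k} (hF : ∀ c : k, F ≠ C c)
    {q : Polynomial k} (hq : q ≠ 0) : Polynomial.aeval F q ∈ kFnonzero k F :=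
  ⟨Polynomial.aeval_mem_adjoin_singleton _ _, aeval_F_ne_zero hF hq⟩

/-- The isomorphism `k[X,Y] ≃ (k[X])[Y]`. -/
noncomputable def e2 (k : Type) [Field k] :
    MvPolynomial (Fin 2) k ≃ₐ[k] Polynomial (Polynomial k) :=
  (MvPolynomial.finSuccEquiv k 1).trans <| Polynomial.mapAlgEquiv <|
    (MvPolynomial.finSuccEquiv k 0).trans
      (Polynomial.mapAlgEquiv (MvPolynomial.isEmptyAlgEquiv k (Fin 0)))

lemma e2_X1 : e2 k (X 1) = Polynomial.C Polynomial.X := by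
  rw [e2, AlgEquiv.trans_apply, ← Fin.succ_zero_eq_one, MvPolynomial.finSuccEquiv_X_succ]
  have h1 : ∀ p : Polynomial (MvPolynomial (Fin 1) k),
      Polynomial.mapAlgEquiv ((MvPolynomial.finSuccEquiv k 0).trans
        (Polynomial.mapAlgEquiv (MvPolynomial.isEmptyAlgEquiv k (Fin 0)))) p
      = p.map ((MvPolynomial.finSuccEquiv k 0).trans
        (Polynomial.mapAlgEquiv (MvPolynomial.isEmptyAlgEquiv k (Fin 0))) :
          MvPolynomial (Fin 1) k →+* Polynomial k) := fun p => rfl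
  rw [h1, Polynomial.map_C]
  congr 1
  show ((MvPolynomial.finSuccEquiv k 0).trans
    (Polynomial.mapAlgEquiv (MvPolynomial.isEmptyAlgEquiv k (Fin 0)))) (X 0) = Polynomial.X
  rw [AlgEquiv.trans_apply, MvPolynomial.finSuccEquiv_X_zero]
  show (Polynomial.X : Polynomial (MvPolynomial (Fin 0) k)).map
    ((MvPolynomial.isEmptyAlgEquiv k (Fin 0)) : MvPolynomial (Fin 0) k →+* k) = Polynomial.X
  rw [Polynomial.map_X]

lemma e2_aeval (q : Polynomial k) :
    e2 k (Polynomial.aeval (X 1 : MvPolynomial (Fin 2) k) q) = Polynomial.C q := by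
  rw [show (e2 k) (Polynomial.aeval (X 1 : MvPolynomial (Fin 2) k) q)
      = Polynomial.aeval (e2 k (X 1)) q from (Polynomial.aeval_algHom_apply (e2 k) _ q).symm,
    e2_X1]
  rw [show (Polynomial.C Polynomial.X : Polynomial (Polynomial k)) =
    algebraMap (Polynomial k) (Polynomial (Polynomial k)) Polynomial.X from rfl]
  rw [Polynomial.aeval_algebraMap_apply, Polynomial.aeval_X_left_apply]
  rfl

lemma symm_mem_span_pair {A B : Type*} [CommRing A] [CommRing B] (e : A ≃+* B) {f g : A} {x : B}
    (hx : x ∈ Ideal.span ({e f, e g} : Set B)) : e.symm x ∈ Ideal.span ({f, g} : Set A) := by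
  have h1 : Ideal.map (e : A →+* B) (Ideal.span {f, g}) = Ideal.span ({e f, e g} : Set B) := by
    rw [Ideal.map_span, Set.image_insert_eq, Set.image_singleton]
    rfl
  rw [← h1] at hx
  obtain ⟨y, hy, hye⟩ := (Ideal.mem_map_iff_of_surjective _ e.surjective).mp hx
  have : e.symm x = y := by rw [← hye, RingEquiv.symm_apply_apply]
  rwa [this]

lemma exists_aeval_X1_mem {f g : MvPolynomial (Fin 2) k} (hf : Prime f) (hfg : ¬ f ∣ g) :
    ∃ q : Polynomial k, q ≠ 0 ∧
      Polynomial.aeval (X 1 : MvPolynomial (Fin 2) k) q ∈ Ideal.span {f, g} := by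
  haveI : DecidableEq k := Classical.decEq k
  have hf' : Prime (e2 k f) := (MulEquiv.prime_iff (e2 k).toRingEquiv.toMulEquiv).mpr hf
  have hfg' : ¬ (e2 k f) ∣ (e2 k g) := by
    rintro ⟨c, hc⟩
    exact hfg ⟨(e2 k).symm c, by
      apply (e2 k).injective
      rw [map_mul, hc, AlgEquiv.apply_symm_apply]⟩
  obtain ⟨r, hr0, hrmem⟩ := gauss_aux hf' hfg'
  refine ⟨r, hr0, ?_⟩
  have h1 := symm_mem_span_pair (e2 k).toRingEquiv (x := Polynomial.C r) hrmem
  have h2 : (e2 k).toRingEquiv.symm (Polynomial.C r) =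
      Polynomial.aeval (X 1 : MvPolynomial (Fin 2) k) r := by
    apply (e2 k).injective
    rw [e2_aeval]
    exact (e2 k).apply_symm_apply _
  rwa [h2] at h1

lemma exists_aeval_X_mem (i : Fin 2) {f g : MvPolynomial (Fin 2) k}
    (hf : Prime f) (hfg : ¬ f ∣ g) :
    ∃ q : Polynomial k, q ≠ 0 ∧
      Polynomial.aeval (X i : MvPolynomial (Fin 2) k) q ∈ Ideal.span {f, g} := by
  fin_cases i
  · -- use the swap automorphism
    set σ : MvPolynomial (Fin 2) k ≃ₐ[k] MvPolynomial (Fin 2) k :=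
      MvPolynomial.renameEquiv k (Equiv.swap (0 : Fin 2) 1) with hσ
    have hf' : Prime (σ f) := (MulEquiv.prime_iff σ.toRingEquiv.toMulEquiv).mpr hf
    have hfg' : ¬ (σ f) ∣ (σ g) := by
      rintro ⟨c, hc⟩
      exact hfg ⟨σ.symm c, by
        apply σ.injective
        rw [map_mul, hc, AlgEquiv.apply_symm_apply]⟩
    obtain ⟨q, hq0, hqmem⟩ := exists_aeval_X1_mem hf' hfg'
    refine ⟨q, hq0, ?_⟩
    have h1 := symm_mem_span_pair σ.toRingEquiv
      (x := Polynomial.aeval (X 1 : MvPolynomial (Fin 2) k) q) hqmem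
    have h2 : σ.toRingEquiv.symm (Polynomial.aeval (X 1 : MvPolynomial (Fin 2) k) q) =
        Polynomial.aeval (X (0 : Fin 2) : MvPolynomial (Fin 2) k) q := by
      rw [show (σ.toRingEquiv.symm : MvPolynomial (Fin 2) k → MvPolynomial (Fin 2) k)
          = (σ.symm : MvPolynomial (Fin 2) k →ₐ[k] MvPolynomial (Fin 2) k) from rfl,
        ← Polynomial.aeval_algHom_apply]
      congr 1
      rw [hσ]
      simp [MvPolynomial.renameEquiv]
    rwa [h2] at h1
  · exact exists_aeval_X1_mem hf hfg

lemma exists_prime_mem {p : Ideal (MvPolynomial (Fin 2) k)} (hp : p ≠ ⊤) (hpbot : p ≠ ⊥)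
    (hprime : p.IsPrime) : ∃ f, Prime f ∧ f ∈ p := by
  obtain ⟨a, hap, ha0⟩ := Submodule.ne_bot_iff p |>.mp hpbot
  have hprod : Associated (UniqueFactorizationMonoid.factors a).prod a :=
    UniqueFactorizationMonoid.factors_prod ha0
  obtain ⟨u, hu⟩ := hprod
  have hmem : (UniqueFactorizationMonoid.factors a).prod ∈ p := by
    have h2 : (UniqueFactorizationMonoid.factors a).prod = a * ↑u⁻¹ :=
      (Units.eq_mul_inv_iff_mul_eq _).mpr hu
    rw [h2]
    exact Ideal.mul_mem_right _ _ hap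
  obtain ⟨f, hfmem, hfp⟩ := (hprime.multiset_prod_mem_iff_exists_mem _).mp hmem
  exact ⟨f, UniqueFactorizationMonoid.prime_of_factor f hfmem, hfp⟩

/-- Core dimension lemma: there is no chain `⊥ < p < p'` of primes of `k[X,Y]` with `p'`
disjoint from `k[F] \ {0}`. -/
lemma core {F : MvPolynomial (Fin 2) k} (hF : ∀ c : k, F ≠ C c)
    {p p' : Ideal (MvPolynomial (Fin 2) k)} (hp' : p'.IsPrime)
    (hd : Disjoint ((kFnonzero k F : Submonoid _) : Set (MvPolynomial (Fin 2) k)) (p' : Set _))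
    (hpbot : p ≠ ⊥) (hp : p.IsPrime) (hlt : p < p') : False := by
  obtain ⟨f, hfprime, hfp⟩ := exists_prime_mem (fun h => hp'.ne_top (top_le_iff.mp (h ▸ hlt.le)))
    hpbot hp
  obtain ⟨g, hgp', hgnp⟩ := SetLike.exists_of_lt hlt
  have hfg : ¬ f ∣ g := by
    rintro ⟨c, rfl⟩
    exact hgnp (Ideal.mul_mem_right _ _ hfp)
  have hspan : Ideal.span {f, g} ≤ p' := by
    rw [Ideal.span_le]
    rintro x hx
    rcases hx with rfl | hx
    · exact hlt.le hfp
    · rw [Set.mem_singleton_iff] at hx; exact hx ▸ hgp'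
  haveI := hp'
  let D := MvPolynomial (Fin 2) k ⧸ p'
  let mkq : MvPolynomial (Fin 2) k →ₐ[k] D := Ideal.Quotient.mkₐ k p'
  have hint : ∀ i : Fin 2, IsIntegral k (mkq (X i)) := by
    intro i
    obtain ⟨q, hq0, hqmem⟩ := exists_aeval_X_mem i hfprime hfg
    refine IsAlgebraic.isIntegral ⟨q, hq0, ?_⟩
    rw [Polynomial.aeval_algHom_apply]
    exact Ideal.Quotient.eq_zero_iff_mem.mpr (hspan hqmem)
  have htop : Algebra.adjoin k (Set.range fun i : Fin 2 => mkq (X i)) = ⊤ := by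
    have : (Set.range fun i : Fin 2 => mkq (X i)) = mkq '' (Set.range X) := by
      rw [← Set.range_comp]; rfl
    rw [this, ← AlgHom.map_adjoin, adjoin_range_X, Algebra.map_top]
    exact (AlgHom.range_eq_top _).mpr (Ideal.Quotient.mkₐ_surjective k p')
  have hFint : IsIntegral k (mkq F) := by
    have hle : Algebra.adjoin k (Set.range fun i : Fin 2 => mkq (X i)) ≤ integralClosure k D :=
      Algebra.adjoin_le (by rintro _ ⟨i, rfl⟩; exact hint i)
    exact hle (htop ▸ Algebra.mem_top)
  obtain ⟨q, hqmonic, hqeval⟩ := hFint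
  have hq0 : q ≠ 0 := hqmonic.ne_zero
  have hqp' : Polynomial.aeval F q ∈ p' := by
    have h2 : mkq (Polynomial.aeval F q) = 0 := by
      rw [← Polynomial.aeval_algHom_apply mkq F q, Polynomial.aeval_def]
      exact hqeval
    rw [Ideal.Quotient.mkₐ_eq_mk] at h2
    exact Ideal.Quotient.eq_zero_iff_mem.mp h2
  exact Set.disjoint_left.mp hd (aeval_F_mem_kFnonzero hF hq0) hqp'

end Main

/-- For `F ∈ A \ k` with `k(F) ⊊ Frac A`, the localization
`𝒜 = (k[F] \ {0})⁻¹ A` is a principal ideal domain of Krull dimension `1`. -/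
theorem stmt12 (k : Type) [Field k] (L : Type) [Field L]
    [Algebra (MvPolynomial (Fin 2) k) L] [IsFractionRing (MvPolynomial (Fin 2) k) L]
    [Algebra k L] [IsScalarTower k (MvPolynomial (Fin 2) k) L]
    (F : MvPolynomial (Fin 2) k) (hF : ∀ c : k, F ≠ C c)
    (hprop : IntermediateField.adjoin k
        ({algebraMap (MvPolynomial (Fin 2) k) L F} : Set L) ≠ ⊤)
    (𝒜 : Type) [CommRing 𝒜] [Algebra (MvPolynomial (Fin 2) k) 𝒜]
    [IsLocalization (kFnonzero k F) 𝒜] :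
    IsDomain 𝒜 ∧ IsPrincipalIdealRing 𝒜 ∧ ringKrullDim 𝒜 = 1 := by
  have hS : kFnonzero k F ≤ nonZeroDivisors (MvPolynomial (Fin 2) k) :=
    fun x hx => mem_nonZeroDivisors_of_ne_zero hx.2
  haveI hdom : IsDomain 𝒜 := IsLocalization.isDomain_of_le_nonZeroDivisors (R := MvPolynomial (Fin 2) k) 𝒜 hS
  have hinj : Function.Injective (algebraMap (MvPolynomial (Fin 2) k) 𝒜) :=
    IsLocalization.injective 𝒜 hS
  -- 𝒜 is not a field
  have hnf : ¬ IsField 𝒜 := by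
    intro hfield
    set N := F.totalDegree + 1 with hN
    set h : MvPolynomial (Fin 2) k := X 1 - X 0 ^ N with hh
    have hh0 : h ≠ 0 := by
      intro h0
      have := congrArg (aeval ![(0 : Polynomial k), Polynomial.X]) h0
      rw [hh] at this
      simp [zero_pow (Nat.succ_ne_zero F.totalDegree)] at this
    have hmap0 : algebraMap (MvPolynomial (Fin 2) k) 𝒜 h ≠ 0 := by
      intro hc
      exact hh0 (hinj (by rw [hc, map_zero]))
    obtain ⟨x, hx⟩ := hfield.mul_inv_cancel hmap0
    obtain ⟨⟨a, t⟩, heq⟩ := IsLocalization.surj (kFnonzero k F) x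
    have hha : h * a = (t : MvPolynomial (Fin 2) k) := by
      apply hinj
      rw [map_mul]
      calc algebraMap _ 𝒜 h * algebraMap _ 𝒜 a
          = algebraMap _ 𝒜 h * (x * algebraMap _ 𝒜 (t : MvPolynomial (Fin 2) k)) := by
            rw [← heq]
        _ = (algebraMap _ 𝒜 h * x) * algebraMap _ 𝒜 (t : MvPolynomial (Fin 2) k) := by ring
        _ = algebraMap _ 𝒜 (t : MvPolynomial (Fin 2) k) := by rw [hx, one_mul]
    obtain ⟨ht1, ht2⟩ := t.2
    rw [Algebra.adjoin_singleton_eq_range_aeval] at ht1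
    obtain ⟨q, hq⟩ := ht1
    have hq' : Polynomial.aeval F q = (t : MvPolynomial (Fin 2) k) := hq
    have hq0 : q ≠ 0 := by
      rintro rfl
      rw [map_zero] at hq'
      exact ht2 hq'.symm
    apply aeval_psiN_ne_zero hF (Nat.lt_succ_self F.totalDegree) hq0 (N := N)
    rw [Polynomial.aeval_algHom_apply, hq', ← hha, map_mul]
    have hpsih : psiN k N h = 0 := by
      rw [hh]
      simp [psiN]
    rw [hpsih, zero_mul]
  -- principality
  have hprin : ∀ P : Ideal 𝒜, P.IsPrime → P.IsPrincipal := by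
    intro P hP
    by_cases hPbot : P = ⊥
    · rw [hPbot]; exact ⟨⟨0, (Submodule.span_zero_singleton _).symm⟩⟩
    · obtain ⟨hpp, hpd⟩ :=
        (IsLocalization.isPrime_iff_isPrime_disjoint (kFnonzero k F) 𝒜 P).mp hP
      set p := Ideal.comap (algebraMap (MvPolynomial (Fin 2) k) 𝒜) P with hpdef
      have hmapcomap := IsLocalization.map_comap (kFnonzero k F) 𝒜 P
      have hpbot : p ≠ ⊥ := by
        intro hc
        apply hPbot
        rw [← hmapcomap, show Ideal.under (MvPolynomial (Fin 2) k) P = p from rfl, hc, Ideal.map_bot]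
      obtain ⟨f, hfprime, hfp⟩ := exists_prime_mem hpp.ne_top hpbot hpp
      have hspan_prime : (Ideal.span {f}).IsPrime :=
        (Ideal.span_singleton_prime hfprime.ne_zero).mpr hfprime
      have hspan_bot : Ideal.span {f} ≠ ⊥ := by
        rw [Ne, Ideal.span_singleton_eq_bot]
        exact hfprime.ne_zero
      have hspan_le : Ideal.span {f} ≤ p := by
        rw [Ideal.span_le, Set.singleton_subset_iff]; exact hfp
      have hspan_eq : Ideal.span {f} = p := by
        by_contra hne
        exact core hF hpp hpd hspan_bot hspan_prime (lt_of_le_of_ne hspan_le hne)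
      refine ⟨⟨algebraMap (MvPolynomial (Fin 2) k) 𝒜 f, ?_⟩⟩
      rw [← hmapcomap, show Ideal.under (MvPolynomial (Fin 2) k) P = p from rfl, ← hspan_eq, Ideal.map_span, Set.image_singleton]
  have hPIR : IsPrincipalIdealRing 𝒜 := IsPrincipalIdealRing.of_prime hprin
  refine ⟨hdom, hPIR, ?_⟩
  -- Krull dimension 1
  obtain ⟨q, hqbot, hqprime⟩ := Ring.not_isField_iff_exists_prime.mp hnf
  have hstep : ∀ i : Fin 1,
      (![(⟨⊥, Ideal.bot_prime⟩ : PrimeSpectrum 𝒜), ⟨q, hqprime⟩] i.castSucc) <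
      (![(⟨⊥, Ideal.bot_prime⟩ : PrimeSpectrum 𝒜), ⟨q, hqprime⟩] i.succ) := by
    intro i
    fin_cases i
    simp only [Fin.castSucc, Matrix.cons_val_zero, Matrix.cons_val_one, Matrix.head_cons]
    rw [← PrimeSpectrum.asIdeal_lt_asIdeal]
    exact bot_lt_iff_ne_bot.mpr hqbot
  let s : LTSeries (PrimeSpectrum 𝒜) := ⟨1, ![⟨⊥, Ideal.bot_prime⟩, ⟨q, hqprime⟩], hstep⟩
  have hge : (1 : WithBot (WithTop ℕ)) ≤ ringKrullDim 𝒜 := by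
    have := Order.LTSeries.length_le_krullDim s
    exact this
  have hle : ringKrullDim 𝒜 ≤ 1 := by
    rw [ringKrullDim, Order.krullDim]
    apply iSup_le
    intro s'
    have hlen : s'.length ≤ 1 := by
      by_contra hlen
      push_neg at hlen
      have h2 : 2 ≤ s'.length := hlen
      have h01 : s' ⟨0, by omega⟩ < s' ⟨1, by omega⟩ := s'.strictMono (by simp [Fin.lt_def])
      have h12 : s' ⟨1, by omega⟩ < s' ⟨2, by omega⟩ := s'.strictMono (by simp [Fin.lt_def])
      set ι := IsLocalization.orderIsoOfPrime (kFnonzero k F) 𝒜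
      have hi01 : ι ⟨(s' ⟨0, by omega⟩).asIdeal, (s' ⟨0, by omega⟩).isPrime⟩ <
          ι ⟨(s' ⟨1, by omega⟩).asIdeal, (s' ⟨1, by omega⟩).isPrime⟩ := by
        rw [ι.lt_iff_lt, Subtype.mk_lt_mk, ← PrimeSpectrum.asIdeal_lt_asIdeal] at *
        exact h01
      have hi12 : ι ⟨(s' ⟨1, by omega⟩).asIdeal, (s' ⟨1, by omega⟩).isPrime⟩ <
          ι ⟨(s' ⟨2, by omega⟩).asIdeal, (s' ⟨2, by omega⟩).isPrime⟩ := by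
        rw [ι.lt_iff_lt, Subtype.mk_lt_mk, ← PrimeSpectrum.asIdeal_lt_asIdeal] at *
        exact h12
      set P1 := ι ⟨(s' ⟨1, by omega⟩).asIdeal, (s' ⟨1, by omega⟩).isPrime⟩
      set P2 := ι ⟨(s' ⟨2, by omega⟩).asIdeal, (s' ⟨2, by omega⟩).isPrime⟩
      have hp1bot : (P1 : Ideal (MvPolynomial (Fin 2) k)) ≠ ⊥ :=
        (bot_le.trans_lt (Subtype.coe_lt_coe.mpr hi01)).ne'
      exact core hF P2.2.1 P2.2.2 hp1bot P1.2.1 (Subtype.coe_lt_coe.mpr hi12)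
    exact_mod_cast Nat.cast_le.mpr hlen
  exact le_antisymm hle hge
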